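/- Let Y be a W-stable lattice with Q^∨ ⊆ Y ⊆ P^∨, Ω_Y ≤ Ω the corresponding subgroup, F the Komrakov–Premet polytope, and F_Y := ⋃_{[ω] ∈ Ω/Ω_Y} ω F for any choice of coset representatives. If λ, λ' ∈ F_Y and λ − λ' ∈ Y, then λ = λ'. -/

import Mathlib

open scoped RealInnerProductSpace Pointwise

noncomputable section

variable (E : Type) [NormedAddCommGroup E] [InnerProductSpace ℝ E] [FiniteDimensional ℝ E]

/-- The coroot `x^∨ = 2x/⟪x,x⟫` of a vector, under the identification of `V` with `V*`
via the inner product. -/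
def coroot (x : E) : E := (2 / ⟪x, x⟫) • x

/-- Data of an irreducible reduced root system `Φ` in a Euclidean space `E`,
together with a system of simple roots `α i`, the highest root `α₀` with its coefficients
`n i`, and the fundamental coweights `ϖ i`. -/
structure KPData (r : ℕ) where
  Φ : Finset E
  Φ_nonempty : Φ.Nonempty
  root_ne_zero : ∀ x ∈ Φ, x ≠ (0 : E)
  span_eq_top : Submodule.span ℝ (Φ : Set E) = ⊤
  reduced : ∀ x ∈ Φ, ∀ t : ℝ, t • x ∈ Φ → t = 1 ∨ t = -1
  integrality : ∀ x ∈ Φ, ∀ y ∈ Φ, ∃ m : ℤ, ⟪coroot E x, y⟫ = (m : ℝ)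
  reflect_mem : ∀ x ∈ Φ, ∀ y ∈ Φ, y - ⟪coroot E x, y⟫ • x ∈ Φ
  irreducible : ∀ S ⊆ (Φ : Set E), (∀ x ∈ S, ∀ y ∈ (Φ : Set E) \ S, ⟪x, y⟫ = 0) →
    S = ∅ ∨ S = (Φ : Set E)
  α : Fin r → E
  α_mem : ∀ i, α i ∈ Φ
  α_indep : LinearIndependent ℝ α
  pos_or_neg : ∀ x ∈ Φ, (∃ c : Fin r → ℝ, (∀ i, 0 ≤ c i) ∧ x = ∑ i, c i • α i) ∨
    (∃ c : Fin r → ℝ, (∀ i, 0 ≤ c i) ∧ x = -∑ i, c i • α i)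
  ϖ : Fin r → E
  ϖ_pair : ∀ i j, ⟪ϖ i, α j⟫ = if i = j then 1 else 0
  n : Fin r → ℕ
  n_pos : ∀ i, 0 < n i
  α₀ : E
  α₀_mem : α₀ ∈ Φ
  α₀_eq : α₀ = ∑ i, (n i : ℝ) • α i
  α₀_highest : ∀ x ∈ Φ, ∃ c : Fin r → ℝ, (∀ i, 0 ≤ c i) ∧ α₀ - x = ∑ i, c i • α i

namespace KPData

variable {E} {r : ℕ} (D : KPData E r)

/-- The set of positive roots. -/
def posRoots : Set E :=
  {x ∈ (D.Φ : Set E) | ∃ c : Fin r → ℝ, (∀ i, 0 ≤ c i) ∧ x = ∑ i, c i • D.α i}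

/-- The closed fundamental alcove `𝒜₀`. -/
def alcove : Set E := {l | (∀ i, 0 ≤ ⟪l, D.α i⟫) ∧ ⟪l, D.α₀⟫ ≤ 1}

/-- The closed fundamental Weyl chamber `𝒞₀`. -/
def chamber : Set E := {l | ∀ i, 0 ≤ ⟪l, D.α i⟫}

/-- The coroot lattice `Q^∨ = ℤΦ^∨`. -/
def corootLattice : AddSubgroup E := AddSubgroup.closure (coroot E '' (D.Φ : Set E))

/-- The root lattice `Q = ℤΦ`. -/
def rootLattice : AddSubgroup E := AddSubgroup.closure (D.Φ : Set E)

/-- The coweight lattice `P^∨`, spanned by the fundamental coweights. -/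
def coweightLattice : AddSubgroup E := AddSubgroup.closure (Set.range D.ϖ)

/-- The weight lattice `P`. -/
def weightLattice : AddSubgroup E where
  carrier := {x | ∀ y ∈ D.Φ, ∃ m : ℤ, ⟪coroot E y, x⟫ = (m : ℝ)}
  zero_mem' := fun y _ => ⟨0, by simp⟩
  add_mem' := by
    rintro a b ha hb y hy
    obtain ⟨m, hm⟩ := ha y hy
    obtain ⟨m', hm'⟩ := hb y hy
    exact ⟨m + m', by rw [inner_add_right, hm, hm']; push_cast; ring⟩
  neg_mem' := by
    rintro a ha y hy
    obtain ⟨m, hm⟩ := ha y hy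
    exact ⟨-m, by rw [inner_neg_right, hm]; push_cast; ring⟩

/-- The reflection in the hyperplane orthogonal to `x`, as an affine automorphism. -/
def refl (x : E) : E ≃ᵃ[ℝ] E :=
  ((Submodule.reflection (ℝ ∙ x)ᗮ).toLinearEquiv).toAffineEquiv

/-- Translation by a vector, as an affine automorphism. -/
def transl (v : E) : E ≃ᵃ[ℝ] E := AffineEquiv.constVAdd ℝ E v

/-- The finite Weyl group `W`, realized as a group of affine automorphisms. -/
def weylGroup : Subgroup (E ≃ᵃ[ℝ] E) :=
  Subgroup.closure {f | ∃ x ∈ D.Φ, f = refl x}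

/-- The intermediate affine Weyl group `W_Λ = Λ ⋊ W` attached to a lattice `Λ`. -/
def affWeylOf (Λ : AddSubgroup E) : Subgroup (E ≃ᵃ[ℝ] E) :=
  Subgroup.closure ({f | ∃ v ∈ Λ, f = transl v} ∪ {f | ∃ x ∈ D.Φ, f = refl x})

/-- The affine Weyl group `W_a = Q^∨ ⋊ W`. -/
def affWeyl : Subgroup (E ≃ᵃ[ℝ] E) := D.affWeylOf D.corootLattice

/-- The extended affine Weyl group `Ŵ_a = P^∨ ⋊ W`. -/
def extAffWeyl : Subgroup (E ≃ᵃ[ℝ] E) := D.affWeylOf D.coweightLattice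

/-- The stabilizer `Ω` of the fundamental alcove in the extended affine Weyl group. -/
def alcoveStab : Subgroup (E ≃ᵃ[ℝ] E) where
  carrier := {f | f ∈ D.extAffWeyl ∧ f '' D.alcove = D.alcove}
  one_mem' := ⟨one_mem _, by simp [AffineEquiv.coe_one, Set.image_id]⟩
  mul_mem' := by
    rintro a b ⟨ha, ha'⟩ ⟨hb, hb'⟩
    exact ⟨mul_mem ha hb, by rw [AffineEquiv.coe_mul, Set.image_comp, hb', ha']⟩
  inv_mem' := by
    rintro f ⟨hf, hf'⟩
    refine ⟨inv_mem hf, ?_⟩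
    conv_lhs => rw [← hf']
    rw [show ⇑(f⁻¹) = ⇑f.symm from rfl, ← Set.image_comp]
    simp [Function.comp_def]

/-- The Komrakov–Premet polytope `F`. -/
def KP : Set E :=
  {l ∈ D.alcove | ∀ i, D.n i = 1 → ⟪l, D.α₀ + D.α i⟫ ≤ 1}

/-- A closed, connected fundamental domain for a group of affine transformations. -/
def IsFundDom (G : Subgroup (E ≃ᵃ[ℝ] E)) (F : Set E) : Prop :=
  IsClosed F ∧ IsConnected F ∧ (⋃ g ∈ G, (g : E ≃ᵃ[ℝ] E) '' F) = Set.univ ∧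
    ∀ g ∈ G, g ≠ 1 → interior ((g : E ≃ᵃ[ℝ] E) '' F ∩ F) = ∅

/-- The length of a Weyl group element: the number of positive roots sent to negative roots. -/
def len (w : E ≃ᵃ[ℝ] E) : ℕ :=
  Nat.card {x : E // x ∈ D.posRoots ∧ w x ∈ Neg.neg '' D.posRoots}

end KPData

open KPData

variable {E} {r : ℕ}

set_option linter.unusedSectionVars false
namespace KPData

variable (D : KPData E r)

/-- A `W`-stable lattice between the coroot lattice and the coweight lattice. -/
def IsWLattice (Λ : AddSubgroup E) : Prop :=
  D.corootLattice ≤ Λ ∧ Λ ≤ D.coweightLattice ∧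
    ∀ w ∈ D.weylGroup, ∀ x ∈ Λ, (w : E ≃ᵃ[ℝ] E) x ∈ Λ

/-- The subgroup `Ω_Λ = π(Λ ⋊ W)` of `Ω` attached to a `W`-lattice `Λ`; since
`W_a ≤ Λ ⋊ W` and `Ŵ_a = W_a ⋊ Ω`, it coincides with `(Λ ⋊ W) ∩ Ω`. -/
def OmegaOf (Λ : AddSubgroup E) : Subgroup (E ≃ᵃ[ℝ] E) :=
  D.affWeylOf Λ ⊓ D.alcoveStab

lemma transl_add (a b : E) : (transl (a + b) : E ≃ᵃ[ℝ] E) = transl a * transl b := by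
  show AffineEquiv.constVAdd ℝ E (a + b) = _
  rw [AffineEquiv.constVAdd_add]
  rfl

lemma transl_neg (a : E) : (transl (-a) : E ≃ᵃ[ℝ] E) = (transl a)⁻¹ := by
  show AffineEquiv.constVAdd ℝ E (-a) = _
  rw [← AffineEquiv.constVAdd_symm]
  rfl

lemma transl_zero : (transl (0 : E) : E ≃ᵃ[ℝ] E) = 1 := by
  show AffineEquiv.constVAdd ℝ E 0 = _
  rw [AffineEquiv.constVAdd_zero]
  rfl

/-- The `W`-lattice `π⁻¹(H) ∩ P^∨` attached to a subgroup `H` of `Ω`; since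
`π⁻¹(H) = W_a · H`, a coweight `v` belongs to it iff `t_v ∈ W_a ⊔ H`. -/
def latticeOf (H : Subgroup (E ≃ᵃ[ℝ] E)) : AddSubgroup E where
  carrier := {v | v ∈ D.coweightLattice ∧ (transl v : E ≃ᵃ[ℝ] E) ∈ D.affWeyl ⊔ H}
  zero_mem' := ⟨zero_mem _, by rw [transl_zero]; exact one_mem _⟩
  add_mem' := by
    rintro a b ⟨ha, ha'⟩ ⟨hb, hb'⟩
    exact ⟨add_mem ha hb, by rw [transl_add]; exact mul_mem ha' hb'⟩
  neg_mem' := by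
    rintro a ⟨ha, ha'⟩
    exact ⟨neg_mem ha, by rw [transl_neg]; exact inv_mem ha'⟩

end KPData

/-! ### Auxiliary lemmas for Statement 18 -/

namespace KPData

variable (D : KPData E r)

lemma inner_coroot_self (x : E) (hx : x ≠ 0) : ⟪coroot E x, x⟫ = 2 := by
  have h : ⟪x, x⟫ ≠ (0:ℝ) := (inner_self_ne_zero (𝕜 := ℝ)).mpr hx
  rw [coroot, real_inner_smul_left]
  field_simp

lemma refl_eval (x y : E) (hx : x ≠ 0) : KPData.refl x y = y - ⟪coroot E x, y⟫ • x := by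
  show (Submodule.reflection (ℝ ∙ x)ᗮ) y = y - ⟪coroot E x, y⟫ • x
  rw [Submodule.reflection_apply, Submodule.starProjection_orthogonal_val, Submodule.starProjection_singleton,
    coroot, real_inner_smul_left, real_inner_self_eq_norm_sq x]
  have : (‖x‖:ℝ)^2 ≠ 0 := by
    have := norm_pos_iff.mpr hx; positivity
  match_scalars
  · field_simp; ring
  · field_simp; rfl

lemma neg_mem_Phi {x : E} (hx : x ∈ D.Φ) : -x ∈ D.Φ := by
  have h := D.reflect_mem x hx x hx
  rw [inner_coroot_self x (D.root_ne_zero x hx)] at h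
  have h2 : x - (2:ℝ) • x = -x := by module
  rwa [h2] at h

lemma span_alpha : Submodule.span ℝ (Set.range D.α) = ⊤ := by
  refine top_unique ?_
  rw [← D.span_eq_top]
  refine Submodule.span_le.mpr fun x hx => ?_
  rcases D.pos_or_neg x hx with ⟨c, _, rfl⟩ | ⟨c, _, rfl⟩
  · exact Submodule.sum_mem _ fun i _ =>
      Submodule.smul_mem _ _ (Submodule.subset_span ⟨i, rfl⟩)
  · exact Submodule.neg_mem _ (Submodule.sum_mem _ fun i _ =>
      Submodule.smul_mem _ _ (Submodule.subset_span ⟨i, rfl⟩))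

lemma inner_w_sum (c : Fin r → ℝ) (j : Fin r) :
    ⟪D.ϖ j, ∑ i, c i • D.α i⟫ = c j := by
  rw [inner_sum]
  simp [real_inner_smul_right, D.ϖ_pair, mul_ite]

lemma pos_coord {y : E} {c : Fin r → ℝ} (hc : y = ∑ i, c i • D.α i) (j : Fin r) :
    ⟪D.ϖ j, y⟫ = c j := by
  rw [hc]; exact D.inner_w_sum c j

lemma sum_coord_alpha (y : E) : ∑ i, ⟪D.ϖ i, y⟫ • D.α i = y := by
  have hy : y ∈ Submodule.span ℝ (Set.range D.α) := by rw [D.span_alpha]; trivial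
  induction hy using Submodule.span_induction with
  | mem x hx =>
    rcases hx with ⟨j, rfl⟩
    simp [D.ϖ_pair, ite_smul]
  | zero => simp
  | add x y _ _ hx hy =>
    simp only [inner_add_right, add_smul, Finset.sum_add_distrib, hx, hy]
  | smul t x _ hx =>
    simp only [real_inner_smul_right, mul_smul, ← Finset.smul_sum, hx]

lemma sum_coord_w (y : E) : ∑ i, ⟪y, D.α i⟫ • D.ϖ i = y := by
  set z := y - ∑ i, ⟪y, D.α i⟫ • D.ϖ i with hzdef
  have hz_orth : ∀ j, ⟪z, D.α j⟫ = 0 := by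
    intro j
    simp only [hzdef, inner_sub_left, sum_inner, real_inner_smul_left]
    have : ∀ i, ⟪y, D.α i⟫ * ⟪D.ϖ i, D.α j⟫ = if i = j then ⟪y, D.α j⟫ else 0 := by
      intro i
      rw [D.ϖ_pair]
      split <;> simp_all
    rw [Finset.sum_congr rfl fun i _ => this i]
    simp
  have hall : ∀ v : E, ⟪z, v⟫ = 0 := by
    intro v
    have hv : v ∈ Submodule.span ℝ (Set.range D.α) := by rw [D.span_alpha]; trivial
    induction hv using Submodule.span_induction with
    | mem x hx => rcases hx with ⟨j, rfl⟩; exact hz_orth j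
    | zero => simp
    | add a b _ _ ha hb => rw [inner_add_right, ha, hb, add_zero]
    | smul t a _ ha => rw [real_inner_smul_right, ha, mul_zero]
  have hz0 : z = 0 := by
    have := hall z
    exact inner_self_eq_zero.mp this
  have := sub_eq_zero.mp hz0
  exact this.symm

lemma inner_self_pos' {x : E} (hx : x ≠ 0) : (0:ℝ) < ⟪x, x⟫ :=
  lt_of_le_of_ne real_inner_self_nonneg (Ne.symm ((inner_self_ne_zero (𝕜 := ℝ)).mpr hx))

lemma root_coord_int_aux (n : ℕ) :
    ∀ y ∈ D.Φ, (∀ i, 0 ≤ ⟪D.ϖ i, y⟫) → (∑ i, ⟪D.ϖ i, y⟫) ≤ (n:ℝ) →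
      ∀ j, ∃ m : ℤ, ⟪D.ϖ j, y⟫ = (m:ℝ) := by
  induction n with
  | zero =>
    intro y hy hpos hsum j
    refine ⟨0, ?_⟩
    have hnn := Finset.sum_nonneg (fun i (_ : i ∈ Finset.univ) => hpos i)
    have hs0 : ∑ i, ⟪D.ϖ i, y⟫ = 0 := le_antisymm (by exact_mod_cast hsum) hnn
    have := (Finset.sum_eq_zero_iff_of_nonneg (fun i _ => hpos i)).mp hs0 j (Finset.mem_univ j)
    simpa using this
  | succ n ih =>
    intro y hy hpos hsum j
    have hyy : (0:ℝ) < ⟪y, y⟫ := inner_self_pos' (D.root_ne_zero y hy)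
    have h2 : ∑ i, ⟪D.ϖ i, y⟫ * ⟪D.α i, y⟫ = ⟪y, y⟫ := by
      have hrw : ⟪y, y⟫ = ⟪(∑ i, ⟪D.ϖ i, y⟫ • D.α i : E), y⟫ := by rw [D.sum_coord_alpha]
      rw [hrw, sum_inner]
      exact Finset.sum_congr rfl fun i _ => by rw [real_inner_smul_left]
    have hex : ∃ i, 0 < ⟪D.ϖ i, y⟫ * ⟪D.α i, y⟫ := by
      by_contra hcon
      push_neg at hcon
      have : ⟪y, y⟫ ≤ 0 := h2 ▸ Finset.sum_nonpos (fun i _ => hcon i)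
      linarith
    obtain ⟨i, hi⟩ := hex
    have hci : 0 < ⟪D.ϖ i, y⟫ := by
      rcases lt_or_eq_of_le (hpos i) with h | h
      · exact h
      · exfalso; rw [← h] at hi; simp at hi
    have hai : 0 < ⟪D.α i, y⟫ := by
      by_contra hcon
      push_neg at hcon
      nlinarith
    obtain ⟨m, hm⟩ := D.integrality (D.α i) (D.α_mem i) y hy
    have haa : (0:ℝ) < ⟪D.α i, D.α i⟫ :=
      inner_self_pos' (D.root_ne_zero _ (D.α_mem i))
    have hmpos : (0:ℝ) < (m:ℝ) := by
      rw [← hm, coroot, real_inner_smul_left]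
      positivity
    have hm1 : (1:ℝ) ≤ (m:ℝ) := by exact_mod_cast (by exact_mod_cast hmpos : (0:ℤ) < m)
    set y' := y - (m:ℝ) • D.α i with hy'def
    have hy'Φ : y' ∈ D.Φ := by
      have h := D.reflect_mem (D.α i) (D.α_mem i) y hy
      rwa [hm] at h
    have hcoord' : ∀ k, ⟪D.ϖ k, y'⟫ = ⟪D.ϖ k, y⟫ - (if k = i then (m:ℝ) else 0) := by
      intro k
      rw [hy'def, inner_sub_right, real_inner_smul_right, D.ϖ_pair]
      split <;> simp
    rcases D.pos_or_neg y' hy'Φ with ⟨c, hcpos, hrep⟩ | ⟨c, hcpos, hrep⟩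
    · have hpos' : ∀ k, 0 ≤ ⟪D.ϖ k, y'⟫ := fun k => by
        rw [D.pos_coord hrep k]; exact hcpos k
      have hsum' : ∑ k, ⟪D.ϖ k, y'⟫ ≤ (n:ℝ) := by
        have : ∑ k, ⟪D.ϖ k, y'⟫ = (∑ k, ⟪D.ϖ k, y⟫) - (m:ℝ) := by
          rw [Finset.sum_congr rfl fun k _ => hcoord' k, Finset.sum_sub_distrib]
          simp
        rw [this]
        push_cast at hsum ⊢
        linarith
      obtain ⟨m', hm'⟩ := ih y' hy'Φ hpos' hsum' j
      refine ⟨m' + (if j = i then m else 0), ?_⟩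
      have hj := hcoord' j
      rw [hm'] at hj
      have : ⟪D.ϖ j, y⟫ = (m':ℝ) + (if j = i then (m:ℝ) else 0) := by linarith [hj]
      rw [this]
      split <;> push_cast <;> simp
    · have hneg' : ∀ k, ⟪D.ϖ k, y'⟫ ≤ 0 := by
        intro k
        have : y' = -∑ l, c l • D.α l := hrep
        have h1 : ⟪D.ϖ k, y'⟫ = -(c k) := by
          rw [this, inner_neg_right, D.inner_w_sum c k]
        rw [h1]
        simp [hcpos k]
      have hzero : ∀ k, k ≠ i → ⟪D.ϖ k, y⟫ = 0 := by
        intro k hk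
        have h1 := hneg' k
        rw [hcoord' k, if_neg hk, sub_zero] at h1
        exact le_antisymm h1 (hpos k)
      have hyrep : y = ⟪D.ϖ i, y⟫ • D.α i := by
        conv_lhs => rw [← D.sum_coord_alpha y]
        rw [Finset.sum_eq_single i (fun k _ hk => by rw [hzero k hk, zero_smul])
          (fun h => absurd (Finset.mem_univ i) h)]
      rcases D.reduced (D.α i) (D.α_mem i) (⟪D.ϖ i, y⟫) (by rw [← hyrep]; exact hy) with h1 | h1
      · refine ⟨if j = i then 1 else 0, ?_⟩
        rcases eq_or_ne j i with rfl | hj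
        · rw [h1]; simp
        · rw [hzero j hj]; simp [hj]
      · exfalso; rw [h1] at hci; linarith

lemma root_coord_int {y : E} (hy : y ∈ D.Φ) (j : Fin r) : ∃ m : ℤ, ⟪D.ϖ j, y⟫ = (m:ℝ) := by
  rcases D.pos_or_neg y hy with ⟨c, hc, hrep⟩ | ⟨c, hc, hrep⟩
  · have hpos : ∀ k, 0 ≤ ⟪D.ϖ k, y⟫ := fun k => by rw [D.pos_coord hrep k]; exact hc k
    obtain ⟨n, hn⟩ := exists_nat_ge (∑ k, ⟪D.ϖ k, y⟫)
    exact D.root_coord_int_aux n y hy hpos hn j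
  · have hyneg : -y ∈ D.Φ := D.neg_mem_Phi hy
    have hrep' : -y = ∑ i, c i • D.α i := by rw [hrep]; simp
    have hpos : ∀ k, 0 ≤ ⟪D.ϖ k, -y⟫ := fun k => by rw [D.pos_coord hrep' k]; exact hc k
    obtain ⟨n, hn⟩ := exists_nat_ge (∑ k, ⟪D.ϖ k, -y⟫)
    obtain ⟨m, hm⟩ := D.root_coord_int_aux n (-y) hyneg hpos hn j
    rw [inner_neg_right] at hm
    exact ⟨-m, by push_cast; linarith⟩

/-- The lattice of vectors pairing integrally with all simple roots. -/
def Pint : AddSubgroup E where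
  carrier := {v | ∀ i, ∃ m : ℤ, ⟪v, D.α i⟫ = (m:ℝ)}
  zero_mem' := fun i => ⟨0, by simp⟩
  add_mem' := by
    rintro a b ha hb i
    obtain ⟨m, hm⟩ := ha i
    obtain ⟨m', hm'⟩ := hb i
    exact ⟨m + m', by rw [inner_add_left, hm, hm']; push_cast; ring⟩
  neg_mem' := by
    rintro a ha i
    obtain ⟨m, hm⟩ := ha i
    exact ⟨-m, by rw [inner_neg_left, hm]; push_cast; ring⟩

lemma mem_Pint {v : E} : v ∈ D.Pint ↔ ∀ i, ∃ m : ℤ, ⟪v, D.α i⟫ = (m:ℝ) := Iff.rfl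

lemma coweight_le_Pint : D.coweightLattice ≤ D.Pint := by
  rw [coweightLattice, AddSubgroup.closure_le]
  rintro v ⟨k, rfl⟩ i
  refine ⟨if k = i then 1 else 0, ?_⟩
  rw [D.ϖ_pair]
  split <;> simp

lemma exists_int_sum {ι : Type*} (s : Finset ι) (f : ι → ℝ)
    (h : ∀ i ∈ s, ∃ m : ℤ, f i = (m:ℝ)) : ∃ m : ℤ, ∑ i ∈ s, f i = (m:ℝ) := by
  classical
  induction s using Finset.induction with
  | empty => exact ⟨0, by simp⟩
  | insert a s hni ih =>
    obtain ⟨m, hm⟩ := h a (Finset.mem_insert_self a s)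
    obtain ⟨m', hm'⟩ := ih fun i hi => h i (Finset.mem_insert_of_mem hi)
    exact ⟨m + m', by rw [Finset.sum_insert hni, hm, hm']; push_cast; ring⟩

lemma Pint_inner_root {v : E} (hv : v ∈ D.Pint) {y : E} (hy : y ∈ D.Φ) :
    ∃ m : ℤ, ⟪v, y⟫ = (m:ℝ) := by
  have hrw : ⟪v, y⟫ = ∑ i, ⟪D.ϖ i, y⟫ * ⟪v, D.α i⟫ := by
    conv_lhs => rw [← D.sum_coord_alpha y]
    rw [inner_sum]
    exact Finset.sum_congr rfl fun i _ => by rw [real_inner_smul_right]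
  rw [hrw]
  refine exists_int_sum _ _ fun i _ => ?_
  obtain ⟨m, hm⟩ := D.root_coord_int hy i
  obtain ⟨m', hm'⟩ := hv i
  exact ⟨m * m', by rw [hm, hm']; push_cast; ring⟩

lemma weyl_fix_zero : ∀ w ∈ D.weylGroup, w 0 = 0 := by
  intro w hw
  induction hw using Subgroup.closure_induction with
  | mem f hf =>
    obtain ⟨x, hx, rfl⟩ := hf
    rw [refl_eval x 0 (D.root_ne_zero x hx)]
    simp
  | one => rfl
  | mul a b _ _ ha hb => show a (b 0) = 0; rw [hb, ha]
  | inv a _ ha =>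
    have : a⁻¹ (a 0) = 0 := a.symm_apply_apply 0
    rwa [ha] at this

lemma affine_apply_add (f : E ≃ᵃ[ℝ] E) (h0 : f 0 = 0) (a b : E) :
    f (a + b) = f a + f b := by
  have h1 : ∀ x y : E, f (x + y) = f.linear x + f y := fun x y => f.toAffineMap.map_vadd y x
  have h2 : f a = f.linear a := by
    have := h1 a 0
    rwa [add_zero, h0, add_zero] at this
  rw [h1 a b, h2]

lemma weyl_apply_add {w : E ≃ᵃ[ℝ] E} (hw : w ∈ D.weylGroup) (a b : E) :
    w (a + b) = w a + w b :=
  affine_apply_add w (D.weyl_fix_zero w hw) a b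

lemma refl_inner (x : E) (hx : x ≠ 0) (v y : E) :
    ⟪KPData.refl x v, y⟫ = ⟪v, KPData.refl x y⟫ := by
  rw [refl_eval x v hx, refl_eval x y hx, coroot, real_inner_smul_left, real_inner_smul_left,
    inner_sub_left, inner_sub_right, real_inner_smul_left, real_inner_smul_right,
    real_inner_comm v x]
  ring

lemma refl_sq (x : E) : KPData.refl x * KPData.refl x = 1 := by
  refine AffineEquiv.ext fun y => ?_
  show (Submodule.reflection (ℝ ∙ x)ᗮ) ((Submodule.reflection (ℝ ∙ x)ᗮ) y) = y
  exact Submodule.reflection_reflection _ y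

lemma refl_inv (x : E) : (KPData.refl x)⁻¹ = KPData.refl x :=
  (inv_eq_of_mul_eq_one_right (refl_sq x))

lemma weyl_stab_PintRoot : ∀ w ∈ D.weylGroup, ∀ v : E,
    (∀ y ∈ D.Φ, ∃ m : ℤ, ⟪v, y⟫ = (m:ℝ)) → ∀ y ∈ D.Φ, ∃ m : ℤ, ⟪w v, y⟫ = (m:ℝ) := by
  have key : ∀ w ∈ D.weylGroup,
      (∀ v : E, (∀ y ∈ D.Φ, ∃ m : ℤ, ⟪v, y⟫ = (m:ℝ)) → ∀ y ∈ D.Φ, ∃ m : ℤ, ⟪w v, y⟫ = (m:ℝ)) ∧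
      (∀ v : E, (∀ y ∈ D.Φ, ∃ m : ℤ, ⟪v, y⟫ = (m:ℝ)) → ∀ y ∈ D.Φ, ∃ m : ℤ, ⟪w⁻¹ v, y⟫ = (m:ℝ)) := by
    intro w hw
    induction hw using Subgroup.closure_induction with
    | mem f hf =>
      obtain ⟨x, hx, rfl⟩ := hf
      have hgen : ∀ v : E, (∀ y ∈ D.Φ, ∃ m : ℤ, ⟪v, y⟫ = (m:ℝ)) →
          ∀ y ∈ D.Φ, ∃ m : ℤ, ⟪KPData.refl x v, y⟫ = (m:ℝ) := by
        intro v hv y hy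
        rw [refl_inner x (D.root_ne_zero x hx) v y]
        have hry : KPData.refl x y ∈ D.Φ := by
          rw [refl_eval x y (D.root_ne_zero x hx)]
          exact D.reflect_mem x hx y hy
        exact hv _ hry
      exact ⟨hgen, by rw [refl_inv]; exact hgen⟩
    | one => exact ⟨fun v hv => hv, fun v hv => hv⟩
    | mul a b _ _ ha hb =>
      refine ⟨fun v hv => ha.1 _ (hb.1 v hv), fun v hv => ?_⟩
      have : (a * b)⁻¹ = b⁻¹ * a⁻¹ := mul_inv_rev a b
      rw [this]
      exact hb.2 _ (ha.2 v hv)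
    | inv a _ ha =>
      refine ⟨ha.2, fun v hv => ?_⟩
      rw [inv_inv]
      exact ha.1 v hv
  exact fun w hw => (key w hw).1

lemma weyl_stab_Pint : ∀ w ∈ D.weylGroup, ∀ v ∈ D.Pint, w v ∈ D.Pint := by
  intro w hw v hv
  rw [mem_Pint]
  intro i
  exact D.weyl_stab_PintRoot w hw v (fun y hy => D.Pint_inner_root hv hy) (D.α i) (D.α_mem i)

lemma weyl_le_affWeylOf (Λ : AddSubgroup E) : D.weylGroup ≤ D.affWeylOf Λ :=
  Subgroup.closure_mono Set.subset_union_right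

lemma transl_mem_affWeylOf {Λ : AddSubgroup E} {v : E} (hv : v ∈ Λ) :
    KPData.transl v ∈ D.affWeylOf Λ :=
  Subgroup.subset_closure (Or.inl ⟨v, hv, rfl⟩)

lemma affWeylOf_decomp (Λ : AddSubgroup E)
    (hst : ∀ w ∈ D.weylGroup, ∀ v : E, v ∈ Λ → w v ∈ Λ) :
    ∀ g ∈ D.affWeylOf Λ, ∃ p ∈ Λ, ∃ w ∈ D.weylGroup, g = KPData.transl p * w := by
  intro g hg
  induction hg using Subgroup.closure_induction with
  | mem f hf =>
    rcases hf with ⟨v, hv, rfl⟩ | ⟨x, hx, rfl⟩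
    · exact ⟨v, hv, 1, one_mem _, (mul_one _).symm⟩
    · exact ⟨0, zero_mem _, KPData.refl x, Subgroup.subset_closure ⟨x, hx, rfl⟩,
        by rw [KPData.transl_zero, one_mul]⟩
  | one => exact ⟨0, zero_mem _, 1, one_mem _, by rw [KPData.transl_zero, one_mul]⟩
  | mul a b _ _ ha hb =>
    obtain ⟨p, hp, w, hw, rfl⟩ := ha
    obtain ⟨q, hq, u, hu, rfl⟩ := hb
    refine ⟨p + w q, add_mem hp (hst w hw q hq), w * u, mul_mem hw hu, ?_⟩
    refine AffineEquiv.ext fun x => ?_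
    show p + w (q + u x) = (p + w q) + w (u x)
    rw [D.weyl_apply_add hw q (u x)]
    abel
  | inv a _ ha =>
    obtain ⟨p, hp, w, hw, rfl⟩ := ha
    refine ⟨w⁻¹ (-p), hst w⁻¹ (inv_mem hw) _ (neg_mem hp), w⁻¹, inv_mem hw, ?_⟩
    refine inv_eq_of_mul_eq_one_right ?_
    refine AffineEquiv.ext fun x => ?_
    have hww : ∀ z, w (w⁻¹ z) = z := fun z => w.apply_symm_apply z
    show p + w (w⁻¹ (-p) + w⁻¹ x) = x
    rw [D.weyl_apply_add hw, hww, hww]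
    abel

lemma inner_alpha0 (x : E) : ⟪x, D.α₀⟫ = ∑ i, (D.n i : ℝ) * ⟪x, D.α i⟫ := by
  rw [D.α₀_eq, inner_sum]
  exact Finset.sum_congr rfl fun i _ => by rw [real_inner_smul_right]

lemma alcove_sum_le_one {x : E} (hx : x ∈ D.alcove) :
    ∑ i, (D.n i : ℝ) * ⟪x, D.α i⟫ ≤ 1 := by
  rw [← D.inner_alpha0]
  exact hx.2

lemma alcove_term_nonneg {x : E} (hx : x ∈ D.alcove) (i : Fin r) :
    0 ≤ (D.n i : ℝ) * ⟪x, D.α i⟫ := by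
  have := hx.1 i
  positivity

lemma alcove_single_le_one {x : E} (hx : x ∈ D.alcove) (i : Fin r) :
    (D.n i : ℝ) * ⟪x, D.α i⟫ ≤ 1 := by
  refine le_trans ?_ (D.alcove_sum_le_one hx)
  exact Finset.single_le_sum (f := fun i => (D.n i : ℝ) * ⟪x, D.α i⟫)
    (fun i _ => D.alcove_term_nonneg hx i) (Finset.mem_univ i)

lemma n_one_le {i : Fin r} : (1:ℝ) ≤ (D.n i : ℝ) := by
  exact_mod_cast D.n_pos i

lemma alcove_coord_le_one {x : E} (hx : x ∈ D.alcove) (i : Fin r) :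
    ⟪x, D.α i⟫ ≤ 1 := by
  have h1 := D.alcove_single_le_one hx i
  have h2 := D.n_one_le (i := i)
  have h3 := hx.1 i
  nlinarith

lemma coord_one {lam lam' : E} (hl : lam ∈ D.alcove) (hl' : lam' ∈ D.alcove) (j : Fin r)
    (hj : ⟪lam, D.α j⟫ - ⟪lam', D.α j⟫ = 1) :
    ∀ i, ⟪lam, D.α i⟫ = if i = j then 1 else 0 := by
  have hcj : ⟪lam, D.α j⟫ = 1 := by
    have h1 := D.alcove_coord_le_one hl j
    have h2 := hl'.1 j
    linarith
  have hnj : (D.n j : ℝ) = 1 := by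
    have h1 := D.alcove_single_le_one hl j
    have h2 := D.n_one_le (i := j)
    rw [hcj, mul_one] at h1
    linarith
  intro i
  rcases eq_or_ne i j with rfl | hij
  · simp [hcj]
  · rw [if_neg hij]
    have hpair : (D.n i : ℝ) * ⟪lam, D.α i⟫ + (D.n j : ℝ) * ⟪lam, D.α j⟫ ≤ 1 := by
      have := Finset.add_le_sum (f := fun k => (D.n k : ℝ) * ⟪lam, D.α k⟫)
        (fun k _ => D.alcove_term_nonneg hl k) (Finset.mem_univ i) (Finset.mem_univ j) hij
      exact le_trans this (D.alcove_sum_le_one hl)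
    rw [hcj, hnj] at hpair
    have h2 := D.n_one_le (i := i)
    have h3 := hl.1 i
    nlinarith

lemma alcove_diff {lam lam' : E} (hl : lam ∈ D.alcove) (hl' : lam' ∈ D.alcove)
    (hint : ∀ i, ∃ m : ℤ, ⟪lam - lam', D.α i⟫ = (m:ℝ)) :
    lam = lam' ∨ (lam ∈ D.Pint ∧ lam' ∈ D.Pint) := by
  by_cases h0 : ∀ i, ⟪lam - lam', D.α i⟫ = 0
  · left
    have hz : lam - lam' = 0 := by
      conv_lhs => rw [← D.sum_coord_w (lam - lam')]
      rw [Finset.sum_congr rfl fun i _ => by rw [h0 i]]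
      simp
    exact sub_eq_zero.mp hz
  · right
    push_neg at h0
    obtain ⟨j, hj⟩ := h0
    obtain ⟨m, hm⟩ := hint j
    have hb1 : ⟪lam - lam', D.α j⟫ ≤ 1 := by
      rw [inner_sub_left]
      have := D.alcove_coord_le_one hl j
      have := hl'.1 j
      linarith
    have hb2 : -1 ≤ ⟪lam - lam', D.α j⟫ := by
      rw [inner_sub_left]
      have := D.alcove_coord_le_one hl' j
      have := hl.1 j
      linarith
    have hm1 : m = 1 ∨ m = -1 := by
      have h1 : (m:ℝ) ≤ 1 := by rw [← hm]; exact hb1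
      have h2 : (-1:ℝ) ≤ (m:ℝ) := by rw [← hm]; exact hb2
      have h3 : m ≠ 0 := by rintro rfl; rw [hm] at hj; exact hj (by norm_num)
      have h4 : m ≤ 1 := by exact_mod_cast h1
      have h5 : -1 ≤ m := by exact_mod_cast h2
      omega
    have main : ∀ mu mu' : E, mu ∈ D.alcove → mu' ∈ D.alcove →
        (∀ i, ∃ m : ℤ, ⟪mu - mu', D.α i⟫ = (m:ℝ)) →
        ⟪mu, D.α j⟫ - ⟪mu', D.α j⟫ = 1 → mu ∈ D.Pint ∧ mu' ∈ D.Pint := by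
      intro mu mu' hmu hmu' hmuint hdiff
      have hkey := D.coord_one hmu hmu' j hdiff
      have hPmu : mu ∈ D.Pint := by
        rw [mem_Pint]
        intro i
        refine ⟨if i = j then 1 else 0, ?_⟩
        rw [hkey i]
        split <;> simp
      refine ⟨hPmu, ?_⟩
      rw [mem_Pint]
      intro i
      obtain ⟨mi, hmi⟩ := hmuint i
      rw [inner_sub_left] at hmi
      refine ⟨(if i = j then 1 else 0) - mi, ?_⟩
      have := hkey i
      push_cast
      split
      all_goals simp_all
      all_goals linarith
    rcases hm1 with rfl | rfl
    · refine main lam lam' hl hl' hint ?_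
      rw [inner_sub_left] at hm
      rw [hm]
      norm_num
    · have hint' : ∀ i, ∃ mi : ℤ, ⟪lam' - lam, D.α i⟫ = (mi:ℝ) := by
        intro i
        obtain ⟨mi, hmi⟩ := hint i
        rw [inner_sub_left] at hmi
        exact ⟨-mi, by rw [inner_sub_left]; push_cast; linarith⟩
      have hd : ⟪lam', D.α j⟫ - ⟪lam, D.α j⟫ = 1 := by
        rw [inner_sub_left] at hm
        push_cast at hm
        linarith
      have hres := main lam' lam hl' hl hint' hd
      exact ⟨hres.2, hres.1⟩

lemma alcove_int_eq {x : E} (hx : x ∈ D.alcove) (hint : x ∈ D.Pint) :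
    x = 0 ∨ ∃ j, D.n j = 1 ∧ x = D.ϖ j := by
  by_cases h0 : ∀ i, ⟪x, D.α i⟫ = 0
  · left
    conv_lhs => rw [← D.sum_coord_w x]
    rw [Finset.sum_congr rfl fun i _ => by rw [h0 i]]
    simp
  · right
    push_neg at h0
    obtain ⟨j, hj⟩ := h0
    obtain ⟨m, hm⟩ := hint j
    have hjpos : 0 < ⟪x, D.α j⟫ := lt_of_le_of_ne (hx.1 j) (Ne.symm hj)
    have hm1 : (1:ℝ) ≤ (m:ℝ) := by
      have : (0:ℝ) < (m:ℝ) := by rw [← hm]; exact hjpos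
      exact_mod_cast (by exact_mod_cast this : (0:ℤ) < m)
    have hcj1 : ⟪x, D.α j⟫ = 1 := by
      have h1 := D.alcove_coord_le_one hx j
      have h2 : (m:ℝ) = ⟪x, D.α j⟫ := hm.symm
      linarith
    have hnj : D.n j = 1 := by
      have h1 := D.alcove_single_le_one hx j
      rw [hcj1, mul_one] at h1
      have h2 := D.n_pos j
      have : (D.n j : ℝ) ≤ 1 := h1
      exact_mod_cast le_antisymm (by exact_mod_cast this) h2
    refine ⟨j, hnj, ?_⟩
    have hzero : ∀ i, i ≠ j → ⟪x, D.α i⟫ = 0 := by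
      intro i hij
      have hpair : (D.n i : ℝ) * ⟪x, D.α i⟫ + (D.n j : ℝ) * ⟪x, D.α j⟫ ≤ 1 := by
        have := Finset.add_le_sum (f := fun k => (D.n k : ℝ) * ⟪x, D.α k⟫)
          (fun k _ => D.alcove_term_nonneg hx k) (Finset.mem_univ i) (Finset.mem_univ j) hij
        exact le_trans this (D.alcove_sum_le_one hx)
      have hnj' : (D.n j : ℝ) = 1 := by exact_mod_cast congrArg Nat.cast hnj
      rw [hcj1, hnj'] at hpair
      have h2 := D.n_one_le (i := i)
      have h3 := hx.1 i
      nlinarith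
    conv_lhs => rw [← D.sum_coord_w x]
    rw [Finset.sum_eq_single j (fun i _ hij => by rw [hzero i hij, zero_smul])
      (fun h => absurd (Finset.mem_univ j) h), hcj1, one_smul]

lemma wt_not_in_KP {j : Fin r} (hn : D.n j = 1) : D.ϖ j ∉ D.KP := by
  intro hKP
  have h2 := hKP.2 j hn
  have hw0 : ⟪D.ϖ j, D.α₀⟫ = (D.n j : ℝ) := by
    rw [D.α₀_eq, inner_sum]
    rw [Finset.sum_congr rfl fun i _ => by
      rw [real_inner_smul_right, D.ϖ_pair]]
    rw [Finset.sum_eq_single j (fun i _ hij => by simp [Ne.symm hij]) 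
      (fun h => absurd (Finset.mem_univ j) h)]
    simp
  rw [inner_add_right, hw0, D.ϖ_pair j j, hn] at h2
  norm_num at h2

lemma alcoveStab_maps {f : E ≃ᵃ[ℝ] E} (hf : f ∈ D.alcoveStab) {x : E} (hx : x ∈ D.alcove) :
    f x ∈ D.alcove := by
  have h := hf.2
  rw [← h]
  exact Set.mem_image_of_mem _ hx

lemma ext_le_affWeylOf_Pint : D.extAffWeyl ≤ D.affWeylOf D.Pint := by
  refine Subgroup.closure_mono ?_
  refine Set.union_subset_union_left _ ?_
  rintro f ⟨v, hv, rfl⟩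
  exact ⟨v, D.coweight_le_Pint hv, rfl⟩

end KPData

/-- For a W-lattice `Y` with associated subgroup `Ω_Y ≤ Ω` and any set `R`
of coset representatives for `Ω/Ω_Y`, two points of `F_Y = ⋃_{ρ∈R} ρF` that are congruent
modulo `Y` coincide. -/
theorem FY_injective_mod_Y (D : KPData E r) (Y : AddSubgroup E) (hY : D.IsWLattice Y)
    (R : Set (E ≃ᵃ[ℝ] E)) (hR : R ⊆ D.alcoveStab)
    (hreps : ∀ ω ∈ D.alcoveStab, ∃! ρ : E ≃ᵃ[ℝ] E, ρ ∈ R ∧ ρ⁻¹ * ω ∈ D.OmegaOf Y)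
    (lam lam' : E)
    (hlam : lam ∈ ⋃ ρ ∈ R, ⇑ρ '' D.KP) (hlam' : lam' ∈ ⋃ ρ ∈ R, ⇑ρ '' D.KP)
    (h : lam - lam' ∈ Y) : lam = lam' := by
  simp only [Set.mem_iUnion, Set.mem_image] at hlam hlam'
  obtain ⟨ρ, hρR, μ, hμF, hμ⟩ := hlam
  obtain ⟨ρ', hρ'R, μ', hμ'F, hμ'⟩ := hlam'
  have hρS := hR hρR
  have hρ'S := hR hρ'R
  have hlam_alc : lam ∈ D.alcove := by
    rw [← hμ]; exact D.alcoveStab_maps hρS hμF.1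
  have hlam'_alc : lam' ∈ D.alcove := by
    rw [← hμ']; exact D.alcoveStab_maps hρ'S hμ'F.1
  have hdiffP : lam - lam' ∈ D.Pint := D.coweight_le_Pint (hY.2.1 h)
  rcases D.alcove_diff hlam_alc hlam'_alc (D.mem_Pint.mp hdiffP) with heq | ⟨hlP, hl'P⟩
  · exact heq
  · obtain ⟨p, hp, w, hw, hρeq⟩ := D.affWeylOf_decomp D.Pint D.weyl_stab_Pint ρ
      (D.ext_le_affWeylOf_Pint hρS.1)
    obtain ⟨p', hp', w', hw', hρ'eq⟩ := D.affWeylOf_decomp D.Pint D.weyl_stab_Pint ρ'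
      (D.ext_le_affWeylOf_Pint hρ'S.1)
    have happly : ∀ z : E, ρ z = p + w z := fun z => by rw [hρeq]; rfl
    have happly' : ∀ z : E, ρ' z = p' + w' z := fun z => by rw [hρ'eq]; rfl
    have hμval : μ = w⁻¹ (-p + lam) := by
      have h1 : lam = p + w μ := by rw [← hμ, happly μ]
      rw [h1, neg_add_cancel_left]
      exact (w.symm_apply_apply μ).symm
    have hμ'val : μ' = w'⁻¹ (-p' + lam') := by
      have h1 : lam' = p' + w' μ' := by rw [← hμ', happly' μ']
      rw [h1, neg_add_cancel_left]
      exact (w'.symm_apply_apply μ').symm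
    have hμP : μ ∈ D.Pint := by
      rw [hμval]
      exact D.weyl_stab_Pint w⁻¹ (inv_mem hw) _ (add_mem (neg_mem hp) hlP)
    have hμ'P : μ' ∈ D.Pint := by
      rw [hμ'val]
      exact D.weyl_stab_Pint w'⁻¹ (inv_mem hw') _ (add_mem (neg_mem hp') hl'P)
    have hμ0 : μ = 0 := by
      rcases D.alcove_int_eq hμF.1 hμP with h0 | ⟨j, hnj, hμw⟩
      · exact h0
      · exact absurd (hμw ▸ hμF) (D.wt_not_in_KP hnj)
    have hμ'0 : μ' = 0 := by
      rcases D.alcove_int_eq hμ'F.1 hμ'P with h0 | ⟨j, hnj, hμ'w⟩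
      · exact h0
      · exact absurd (hμ'w ▸ hμ'F) (D.wt_not_in_KP hnj)
    have hlam_eq : lam = ρ 0 := by rw [← hμ, hμ0]
    have hlam'_eq : lam' = ρ' 0 := by rw [← hμ', hμ'0]
    have hp_eq : p = lam := by
      rw [hlam_eq, happly 0, D.weyl_fix_zero w hw, add_zero]
    have hp'_eq : p' = lam' := by
      rw [hlam'_eq, happly' 0, D.weyl_fix_zero w' hw', add_zero]
    have hρeq2 : ρ = KPData.transl lam * w := by rw [hρeq, hp_eq]
    have hρ'eq2 : ρ' = KPData.transl lam' * w' := by rw [hρ'eq, hp'_eq]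
    have hform : ρ'⁻¹ * ρ = w'⁻¹ * (KPData.transl (lam - lam') * w) := by
      rw [hρeq2, hρ'eq2, mul_inv_rev, mul_assoc]
      congr 1
      rw [← KPData.transl_neg, ← mul_assoc, ← KPData.transl_add, neg_add_eq_sub]
    have hσaff : ρ'⁻¹ * ρ ∈ D.affWeylOf Y := by
      rw [hform]
      exact mul_mem (inv_mem (D.weyl_le_affWeylOf Y hw'))
        (mul_mem (D.transl_mem_affWeylOf h) (D.weyl_le_affWeylOf Y hw))
    have hσ : ρ'⁻¹ * ρ ∈ D.OmegaOf Y :=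
      Subgroup.mem_inf.mpr ⟨hσaff, mul_mem (inv_mem hρ'S) hρS⟩
    obtain ⟨σ₀, hσ₀, huniq⟩ := hreps ρ hρS
    have h1 : ρ = σ₀ := huniq ρ ⟨hρR, by rw [inv_mul_cancel]; exact one_mem _⟩
    have h2 : ρ' = σ₀ := huniq ρ' ⟨hρ'R, hσ⟩
    rw [hlam_eq, hlam'_eq, h1, h2]
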